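/- Let f(θ) = −log( exp(p(θ,y)/τ) / Σ_{v ∈ V} exp(p(θ,v)/τ) ) be the per-token ranking-guided generation loss and g(θ) = τ · log( Σ_{v ≠ y} exp( (p(θ,v) − p(θ,y)) / τ ) ) + τ·ρ the KL-constrained DRO objective with parameter ρ ∈ ℝ. Then both are differentiable at θ₀ and the Fréchet derivative of f at θ₀ equals c • (Fréchet derivative of g at θ₀), where c = ( Σ_{v ≠ y} exp(p(θ₀,v)/τ) ) / ( τ · Σ_{v ∈ V} exp(p(θ₀,v)/τ) ) > 0; hence minimizing the ranking-guided generation loss is, up to a positive scalar factor of the gradient, a surrogate for minimizing the DRO objective L_DRO^{ρ,τ}. -/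

import Mathlib

open Real Finset

/-- The ranking-guided generation loss
`f θ = −log( exp(p θ y / τ) / ∑_{v ∈ V} exp(p θ v / τ) )` and the KL-constrained DRO
objective `g θ = τ * log( ∑_{v ≠ y} exp( (p θ v − p θ y) / τ ) ) + τ * ρ` are both
differentiable at `θ₀`, the scalar
`c = ( ∑_{v ≠ y} exp(p θ₀ v / τ) ) / ( τ * ∑_{v ∈ V} exp(p θ₀ v / τ) )` is positive,
and the Fréchet derivative of `f` at `θ₀` equals `c` times that of `g`; hence `f` is,
up to a positive scalar factor of the gradient, a surrogate for `g`. -/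
theorem ranking_guided_loss_surrogate_of_dro
    {E : Type*} [NormedAddCommGroup E] [NormedSpace ℝ E]
    {V : Type*} [Fintype V] [DecidableEq V] (hV : 1 < Fintype.card V)
    (y : V) (τ : ℝ) (hτ : 0 < τ)
    (p : E → V → ℝ) (θ₀ : E) (D : V → E →L[ℝ] ℝ)
    (hD : ∀ v, HasFDerivAt (fun θ => p θ v) (D v) θ₀)
    (ρ : ℝ) :
    DifferentiableAt ℝ
        (fun θ => -Real.log (Real.exp (p θ y / τ) / ∑ v, Real.exp (p θ v / τ))) θ₀ ∧
      DifferentiableAt ℝ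
        (fun θ =>
          τ * Real.log (∑ v ∈ Finset.univ.filter (· ≠ y),
            Real.exp ((p θ v - p θ y) / τ)) + τ * ρ) θ₀ ∧
      0 < (∑ v ∈ Finset.univ.filter (· ≠ y), Real.exp (p θ₀ v / τ)) /
            (τ * ∑ v, Real.exp (p θ₀ v / τ)) ∧
      fderiv ℝ
          (fun θ => -Real.log (Real.exp (p θ y / τ) / ∑ v, Real.exp (p θ v / τ))) θ₀ =
        ((∑ v ∈ Finset.univ.filter (· ≠ y), Real.exp (p θ₀ v / τ)) /
            (τ * ∑ v, Real.exp (p θ₀ v / τ))) •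
          fderiv ℝ
            (fun θ =>
              τ * Real.log (∑ v ∈ Finset.univ.filter (· ≠ y),
                Real.exp ((p θ v - p θ y) / τ)) + τ * ρ) θ₀ := by
  have hτ' : τ ≠ 0 := ne_of_gt hτ
  have hpv : ∀ v, HasFDerivAt (fun θ => p θ v / τ) (τ⁻¹ • D v) θ₀ := by
    intro v
    have := (hD v).mul_const τ⁻¹
    simpa [div_eq_mul_inv, smul_comm] using this
  -- S positive everywhere
  haveI : Nonempty V := Fintype.card_pos_iff.mp (by omega)
  have hSpos : ∀ θ : E, 0 < ∑ v, Real.exp (p θ v / τ) := fun θ =>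
    Finset.sum_pos (fun v _ => Real.exp_pos _) Finset.univ_nonempty
  -- derivative of S
  have hS : HasFDerivAt (fun θ => ∑ v, Real.exp (p θ v / τ))
      (∑ v, Real.exp (p θ₀ v / τ) • (τ⁻¹ • D v)) θ₀ :=
    HasFDerivAt.fun_sum fun v _ => (hpv v).exp
  -- f equals log S - p θ y / τ
  have hfe : (fun θ => -Real.log (Real.exp (p θ y / τ) / ∑ v, Real.exp (p θ v / τ)))
      = fun θ => Real.log (∑ v, Real.exp (p θ v / τ)) - p θ y / τ := by
    funext θ
    rw [Real.log_div (Real.exp_ne_zero _) (ne_of_gt (hSpos θ)), Real.log_exp]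
    ring
  have hF : HasFDerivAt
      (fun θ => -Real.log (Real.exp (p θ y / τ) / ∑ v, Real.exp (p θ v / τ)))
      ((∑ v, Real.exp (p θ₀ v / τ))⁻¹ • (∑ v, Real.exp (p θ₀ v / τ) • (τ⁻¹ • D v))
        - τ⁻¹ • D y) θ₀ := by
    rw [hfe]
    exact (hS.log (ne_of_gt (hSpos θ₀))).sub (hpv y)
  -- nonempty filter
  have hne : (Finset.univ.filter (· ≠ y)).Nonempty := by
    obtain ⟨v, hv⟩ := Fintype.exists_ne_of_one_lt_card hV y
    exact ⟨v, by simp [hv]⟩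
  have hTpos : ∀ θ : E, 0 < ∑ v ∈ Finset.univ.filter (· ≠ y),
      Real.exp ((p θ v - p θ y) / τ) := fun θ =>
    Finset.sum_pos (fun v _ => Real.exp_pos _) hne
  have hpd : ∀ v, HasFDerivAt (fun θ => (p θ v - p θ y) / τ)
      (τ⁻¹ • (D v - D y)) θ₀ := by
    intro v
    have := ((hD v).sub (hD y)).mul_const τ⁻¹
    simpa [div_eq_mul_inv, smul_comm] using this
  have hT : HasFDerivAt (fun θ => ∑ v ∈ Finset.univ.filter (· ≠ y),
      Real.exp ((p θ v - p θ y) / τ))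
      (∑ v ∈ Finset.univ.filter (· ≠ y),
        Real.exp ((p θ₀ v - p θ₀ y) / τ) • (τ⁻¹ • (D v - D y))) θ₀ :=
    HasFDerivAt.fun_sum fun v _ => (hpd v).exp
  have hG : HasFDerivAt
      (fun θ => τ * Real.log (∑ v ∈ Finset.univ.filter (· ≠ y),
        Real.exp ((p θ v - p θ y) / τ)) + τ * ρ)
      (τ • ((∑ v ∈ Finset.univ.filter (· ≠ y), Real.exp ((p θ₀ v - p θ₀ y) / τ))⁻¹ •
        ∑ v ∈ Finset.univ.filter (· ≠ y),
          Real.exp ((p θ₀ v - p θ₀ y) / τ) • (τ⁻¹ • (D v - D y)))) θ₀ :=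
    ((hT.log (ne_of_gt (hTpos θ₀))).const_mul τ).add_const (τ * ρ)
  -- abbreviations
  set S := ∑ v, Real.exp (p θ₀ v / τ) with hSdef
  set S' := ∑ v ∈ Finset.univ.filter (· ≠ y), Real.exp (p θ₀ v / τ) with hS'def
  have hS'pos : 0 < S' := Finset.sum_pos (fun v _ => Real.exp_pos _) hne
  have hSpos0 : 0 < S := hSpos θ₀
  have hey : Real.exp (p θ₀ y / τ) ≠ 0 := Real.exp_ne_zero _
  have hexp : ∀ v, Real.exp ((p θ₀ v - p θ₀ y) / τ)
      = Real.exp (p θ₀ v / τ) / Real.exp (p θ₀ y / τ) := by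
    intro v; rw [sub_div, Real.exp_sub]
  have hTval : (∑ v ∈ Finset.univ.filter (· ≠ y), Real.exp ((p θ₀ v - p θ₀ y) / τ))
      = S' / Real.exp (p θ₀ y / τ) := by
    rw [hS'def, Finset.sum_div]
    exact Finset.sum_congr rfl fun v _ => hexp v
  have hcpos : 0 < S' / (τ * S) := div_pos hS'pos (mul_pos hτ hSpos0)
  refine ⟨hF.differentiableAt, hG.differentiableAt, hcpos, ?_⟩
  rw [hF.fderiv, hG.fderiv]
  ext x
  simp only [ContinuousLinearMap.sub_apply, ContinuousLinearMap.smul_apply,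
    ContinuousLinearMap.coe_sum', Finset.sum_apply, smul_eq_mul]
  set A := ∑ v ∈ Finset.univ.filter (· ≠ y),
      Real.exp (p θ₀ v / τ) * (D v x - D y x) with hAdef
  have hsum2 : ∑ v ∈ Finset.univ.filter (· ≠ y),
      Real.exp ((p θ₀ v - p θ₀ y) / τ) * (τ⁻¹ * (D v x - D y x))
      = ((Real.exp (p θ₀ y / τ))⁻¹ * τ⁻¹) * A := by
    rw [hAdef, Finset.mul_sum]
    refine Finset.sum_congr rfl fun v _ => ?_
    rw [hexp v]
    field_simp
  have hA' : A = ∑ v, Real.exp (p θ₀ v / τ) * (D v x - D y x) := by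
    rw [hAdef, Finset.filter_ne']
    exact Finset.sum_erase _ (by simp)
  have key : ∑ v, Real.exp (p θ₀ v / τ) * (τ⁻¹ * D v x)
      = τ⁻¹ * (A + S * D y x) := by
    rw [hA', hSdef, Finset.sum_mul, ← Finset.sum_add_distrib, Finset.mul_sum]
    exact Finset.sum_congr rfl fun v _ => by ring
  rw [key, hsum2, hTval]
  have hS' : S' ≠ 0 := ne_of_gt hS'pos
  have hS0 : S ≠ 0 := ne_of_gt hSpos0
  field_simp
  ring
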